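/- There exists a real number K ≥ 1 such that for every real k ≥ K the following holds. Set α = 1/√(k+3) and M = ⌈2π√(k+3)⌉. Let S ⊆ ℂ be a set containing the closed disk of radius k+1 centered at 0, and let P ⊆ ℂ be a set of points such that for every integer i with 0 ≤ i < M there exists p ∈ P whose modulus satisfies k + 3/2 ≤ |p| ≤ k + 2 and whose argument lies (mod 2π) in the interval (αi, α(i+1)]. Then the closed disk of radius k+2 centered at 0 is contained in the convex hull of S ∪ ⋃_{p ∈ P} (closed unit disk centered at p). -/

import Mathlib

open Real Complex Set

private lemma expform (x : ℝ) :
    Complex.exp ((x : ℂ) * Complex.I) = (Real.cos x : ℂ) + (Real.sin x : ℂ) * Complex.I := by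
  rw [Complex.exp_mul_I]; push_cast; ring

private lemma lemB {C : Set ℂ} (hC : Convex ℝ C) (h0 : (0:ℂ) ∈ C) {qa qb : ℂ}
    (hqa : qa ∈ C) (hqb : qb ∈ C)
    {ρa ρb ψa ψb θ r : ℝ} (hρa : 0 < ρa) (hρb : 0 < ρb)
    (ha : qa = (ρa:ℂ) * Complex.exp ((ψa:ℂ) * Complex.I))
    (hb : qb = (ρb:ℂ) * Complex.exp ((ψb:ℂ) * Complex.I))
    (h1 : ψa ≤ θ) (h2 : θ ≤ ψb) (hgap : ψb - ψa ≤ π/2)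
    (hr : 0 < r)
    (hra : r ≤ ρa * Real.cos ((ψb - ψa)/2))
    (hrb : r ≤ ρb * Real.cos ((ψb - ψa)/2)) :
    (r:ℂ) * Complex.exp ((θ:ℂ) * Complex.I) ∈ C := by
  have hpi : (3:ℝ) < π := by nlinarith [Real.pi_gt_three]
  have hA : ρa * Real.sin (ψa - θ) ≤ 0 := by
    have : Real.sin (ψa - θ) ≤ 0 :=
      Real.sin_nonpos_of_nonpos_of_neg_pi_le (by linarith) (by linarith)
    nlinarith
  have hB : 0 ≤ ρb * Real.sin (ψb - θ) := by
    have : 0 ≤ Real.sin (ψb - θ) :=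
      Real.sin_nonneg_of_nonneg_of_le_pi (by linarith) (by linarith)
    nlinarith
  set A := ρa * Real.sin (ψa - θ) with hAdef
  set B := ρb * Real.sin (ψb - θ) with hBdef
  set t := -A / (B - A) with htdef
  have hBA : 0 ≤ B - A := by linarith
  have ht0 : 0 ≤ t := div_nonneg (by linarith) hBA
  have hkey : (1 - t) * A + t * B = 0 := by
    rcases eq_or_lt_of_le hBA with h | h
    · have hA0 : A = 0 := le_antisymm hA (by linarith)
      have hB0 : B = 0 := by linarith
      rw [hA0, hB0]; ring
    · have hta : t * (B - A) = -A := by rw [htdef]; exact div_mul_cancel₀ _ (ne_of_gt h)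
      linear_combination hta
  have ht1 : t ≤ 1 := by
    rcases eq_or_lt_of_le hBA with h | h
    · simp [htdef, ← h]
    · rw [htdef, div_le_one h]; linarith
  set Rw := (1 - t) * (ρa * Real.cos (ψa - θ)) + t * (ρb * Real.cos (ψb - θ)) with hRwdef
  set w := (1 - t) • qa + t • qb with hwdef
  have hcosA : 0 ≤ Real.cos (ψa - θ) :=
    Real.cos_nonneg_of_neg_pi_div_two_le_of_le (by linarith) (by linarith)
  have hcosB : 0 ≤ Real.cos (ψb - θ) :=
    Real.cos_nonneg_of_neg_pi_div_two_le_of_le (by linarith) (by linarith)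
  have hRw0 : 0 ≤ Rw := by
    have h1' : 0 ≤ (1 - t) * (ρa * Real.cos (ψa - θ)) :=
      mul_nonneg (by linarith) (mul_nonneg hρa.le hcosA)
    have h2' : 0 ≤ t * (ρb * Real.cos (ψb - θ)) :=
      mul_nonneg ht0 (mul_nonneg hρb.le hcosB)
    linarith
  -- w = Rw * exp (θ I)
  have ea : ((ψa:ℂ)) * Complex.I = ((ψa - θ : ℝ):ℂ) * Complex.I + (θ:ℂ) * Complex.I := by
    push_cast; ring
  have eb : ((ψb:ℂ)) * Complex.I = ((ψb - θ : ℝ):ℂ) * Complex.I + (θ:ℂ) * Complex.I := by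
    push_cast; ring
  have expand : w = (((Rw : ℝ) : ℂ) + (((1-t)*A + t*B : ℝ):ℂ) * Complex.I)
      * Complex.exp ((θ:ℂ) * Complex.I) := by
    rw [hwdef, ha, hb, ea, eb, Complex.exp_add, Complex.exp_add,
      expform (ψa - θ), expform (ψb - θ),
      Complex.real_smul, Complex.real_smul, hRwdef, hAdef, hBdef]
    push_cast
    ring
  rw [hkey] at expand
  have hwe : w = (Rw : ℂ) * Complex.exp ((θ:ℂ) * Complex.I) := by
    rw [expand]; push_cast; ring
  have habs : ‖w‖ = Rw := by
    rw [hwe, norm_mul, Complex.norm_exp_ofReal_mul_I, Complex.norm_real, Real.norm_eq_abs, _root_.abs_of_nonneg hRw0,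
      mul_one]
  -- projection bound : r ≤ Rw
  have hproj : r ≤ Rw := by
    set μ := (ψa + ψb) / 2 with hμdef
    have eμa : ((ψa:ℂ)) * Complex.I = ((ψa - μ : ℝ):ℂ) * Complex.I + (μ:ℂ) * Complex.I := by
      push_cast; ring
    have eμb : ((ψb:ℂ)) * Complex.I = ((ψb - μ : ℝ):ℂ) * Complex.I + (μ:ℂ) * Complex.I := by
      push_cast; ring
    have hwm' : w = ((((1 - t) * (ρa * Real.cos (ψa - μ)) + t * (ρb * Real.cos (ψb - μ)) : ℝ) : ℂ)
        + (((1 - t) * (ρa * Real.sin (ψa - μ)) + t * (ρb * Real.sin (ψb - μ)) : ℝ):ℂ)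
          * Complex.I) * Complex.exp ((μ:ℂ) * Complex.I) := by
      rw [hwdef, ha, hb, eμa, eμb, Complex.exp_add, Complex.exp_add,
        expform (ψa - μ), expform (ψb - μ), Complex.real_smul, Complex.real_smul]
      push_cast
      ring
    have hwm : Complex.exp (((-μ : ℝ):ℂ) * Complex.I) * w =
        (((1 - t) * (ρa * Real.cos (ψa - μ)) + t * (ρb * Real.cos (ψb - μ)) : ℝ) : ℂ)
        + (((1 - t) * (ρa * Real.sin (ψa - μ)) + t * (ρb * Real.sin (ψb - μ)) : ℝ):ℂ)
          * Complex.I := by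
      rw [hwm', mul_comm, mul_assoc, ← Complex.exp_add]
      rw [show (μ:ℂ) * Complex.I + ((-μ:ℝ):ℂ) * Complex.I = 0 by push_cast; ring]
      rw [Complex.exp_zero, mul_one]
    have hre : (Complex.exp (((-μ:ℝ):ℂ) * Complex.I) * w).re =
        (1 - t) * (ρa * Real.cos (ψa - μ)) + t * (ρb * Real.cos (ψb - μ)) := by
      rw [hwm]
      have hgen : ∀ x y : ℝ, ((x:ℂ) + (y:ℂ) * Complex.I).re = x := by intro x y; simp
      exact hgen _ _
    have hrele : (Complex.exp (((-μ:ℝ):ℂ) * Complex.I) * w).re ≤ ‖w‖ := by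
      calc (Complex.exp (((-μ:ℝ):ℂ) * Complex.I) * w).re
          ≤ |(Complex.exp (((-μ:ℝ):ℂ) * Complex.I) * w).re| := le_abs_self _
        _ ≤ ‖Complex.exp (((-μ:ℝ):ℂ) * Complex.I) * w‖ := Complex.abs_re_le_norm _
        _ = ‖w‖ := by rw [norm_mul, Complex.norm_exp_ofReal_mul_I, one_mul]
    have hcosμa : Real.cos (ψa - μ) = Real.cos ((ψb - ψa)/2) := by
      rw [hμdef, show ψa - (ψa + ψb)/2 = -((ψb - ψa)/2) by ring, Real.cos_neg]
    have hcosμb : Real.cos (ψb - μ) = Real.cos ((ψb - ψa)/2) := by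
      rw [hμdef, show ψb - (ψa + ψb)/2 = (ψb - ψa)/2 by ring]
    have hlow : r ≤ (1 - t) * (ρa * Real.cos (ψa - μ)) + t * (ρb * Real.cos (ψb - μ)) := by
      rw [hcosμa, hcosμb]
      nlinarith
    rw [hre] at hrele
    rw [habs] at hrele
    linarith
  -- conclude
  have hRwpos : 0 < Rw := lt_of_lt_of_le hr hproj
  set s := r / Rw with hsdef
  have hs0 : 0 ≤ s := div_nonneg hr.le hRw0
  have hs1 : s ≤ 1 := by rw [hsdef, div_le_one hRwpos]; exact hproj
  have hwC : w ∈ C := hC hqa hqb (by linarith) ht0 (by ring)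
  have hzC : s • w + (1 - s) • (0:ℂ) ∈ C := hC hwC h0 hs0 (by linarith) (by ring)
  have heq : s • w + (1 - s) • (0:ℂ) = (r:ℂ) * Complex.exp ((θ:ℂ) * Complex.I) := by
    have hRne : (Rw:ℂ) ≠ 0 := by
      exact_mod_cast ne_of_gt hRwpos
    rw [smul_zero, add_zero, hwe, Complex.real_smul, hsdef, ← mul_assoc]
    congr 1
    push_cast
    field_simp
  rwa [heq] at hzC

set_option maxHeartbeats 1000000 in
/-- Deterministic covering step in the proof of Proposition 3.7: for all large `k`,
if `S` contains the closed disk of radius `k+1` about the origin and each of the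
`M = ⌈2π√(k+3)⌉` angular sectors of width `α = 1/√(k+3)` of the ring
`{k + 3/2 ≤ |z| ≤ k + 2}` contains a point of `P`, then the convex hull of `S`
together with the unit disks centered at the points of `P` contains the closed disk
of radius `k+2`. -/
theorem covering_step :
    ∃ K : ℝ, 1 ≤ K ∧ ∀ k : ℝ, K ≤ k → ∀ S P : Set ℂ,
      Metric.closedBall (0 : ℂ) (k + 1) ⊆ S →
      (∀ i : ℤ, 0 ≤ i → i < ⌈2 * Real.pi * Real.sqrt (k + 3)⌉ →
        ∃ p ∈ P, k + 3 / 2 ≤ ‖p‖ ∧ ‖p‖ ≤ k + 2 ∧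
          ∃ θ ∈ Set.Ioc ((1 / Real.sqrt (k + 3)) * (i : ℝ))
              ((1 / Real.sqrt (k + 3)) * ((i : ℝ) + 1)),
            p = ((‖p‖ : ℝ) : ℂ) * Complex.exp (θ * Complex.I)) →
      Metric.closedBall (0 : ℂ) (k + 2) ⊆
        convexHull ℝ (S ∪ ⋃ p ∈ P, Metric.closedBall p 1) := by
  refine ⟨1, le_refl 1, ?_⟩
  intro k hk S P hS hP z hz
  have hpi : (3:ℝ) < π := by nlinarith [Real.pi_gt_three]
  set sq := Real.sqrt (k + 3) with hsqdef
  have hk3 : (0:ℝ) ≤ k + 3 := by linarith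
  have hsq2 : sq * sq = k + 3 := Real.mul_self_sqrt hk3
  have hsqnn : 0 ≤ sq := Real.sqrt_nonneg _
  have hsq : 2 ≤ sq := by nlinarith
  have hsqpos : 0 < sq := by linarith
  set α := 1 / sq with hαdef
  have hα0 : 0 < α := by positivity
  have hαle : α ≤ 1/2 := by
    rw [hαdef, div_le_div_iff₀ hsqpos (by norm_num)]; linarith
  have hα2 : α * α * (k+3) = 1 := by
    rw [hαdef]; field_simp; linarith [hsq2]
  set M := ⌈2 * π * sq⌉ with hMdef
  have hM1 : 2 * π * sq ≤ (M:ℝ) := Int.le_ceil _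
  have hM2 : (M:ℝ) < 2 * π * sq + 1 := Int.ceil_lt_add_one _
  have hM3 : (2:ℤ) ≤ M := by
    have : (2:ℝ) ≤ (M:ℝ) := by nlinarith
    exact_mod_cast this
  -- basic facts about z
  have hzle : ‖z‖ ≤ k + 2 := by
    simpa [Complex.dist_eq] using hz
  set C := convexHull ℝ (S ∪ ⋃ p ∈ P, Metric.closedBall p 1) with hCdef
  by_cases hr1 : ‖z‖ ≤ k + 1
  · refine subset_convexHull ℝ _ (Or.inl (hS ?_))
    simpa [Complex.dist_eq] using hr1
  push_neg at hr1
  have hrpos : 0 < ‖z‖ := by linarith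
  have hz0 : z ≠ 0 := by
    intro h; rw [h] at hr1; simp at hr1; linarith
  -- angle normalization
  set T := z.arg with hTdef
  have hTl : -π < T := Complex.neg_pi_lt_arg z
  have hTu : T ≤ π := Complex.arg_le_pi z
  set T' := if 0 ≤ T then T else T + 2*π with hT'def
  have hper : ∀ x : ℝ, Complex.exp (((x + 2*π : ℝ):ℂ) * Complex.I)
      = Complex.exp ((x:ℂ) * Complex.I) := by
    intro x
    rw [show ((x + 2*π:ℝ):ℂ) * Complex.I = (x:ℂ)*Complex.I + 2*π*Complex.I by push_cast; ring,
      Complex.exp_add, Complex.exp_two_pi_mul_I, mul_one]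
  have hT'0 : 0 ≤ T' := by
    rw [hT'def]; split_ifs with h
    · exact h
    · push_neg at h; linarith
  have hT'2π : T' < 2*π := by
    rw [hT'def]; split_ifs with h
    · linarith
    · push_neg at h; linarith
  have hzrep : z = ((‖z‖ : ℝ):ℂ) * Complex.exp ((T':ℝ) * Complex.I) := by
    rw [hT'def]; split_ifs with h
    · exact (Complex.norm_mul_exp_arg_mul_I z).symm
    · rw [hper T]; exact (Complex.norm_mul_exp_arg_mul_I z).symm
  -- index
  set j := ⌊T' * sq⌋ with hjdef
  have hj0 : 0 ≤ j := Int.floor_nonneg.2 (mul_nonneg hT'0 hsqnn)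
  have hjle : (j:ℝ) ≤ T' * sq := Int.floor_le _
  have hjlt : T' * sq < (j:ℝ) + 1 := Int.lt_floor_add_one _
  have hjM : j < M := by
    have : (j:ℝ) < (M:ℝ) := by nlinarith
    exact_mod_cast this
  have hαj : α * (j:ℝ) ≤ T' := by
    rw [hαdef, div_mul_eq_mul_div, div_le_iff₀ hsqpos]; linarith
  have hαj' : T' < α * ((j:ℝ) + 1) := by
    rw [hαdef, div_mul_eq_mul_div, lt_div_iff₀ hsqpos]; linarith
  have hαM : 2*π ≤ α * (M:ℝ) := by
    rw [hαdef, div_mul_eq_mul_div, le_div_iff₀ hsqpos]; linarith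
  have hαM1 : α * ((M:ℝ) - 1) < 2*π := by
    rw [hαdef, div_mul_eq_mul_div, div_lt_iff₀ hsqpos]; nlinarith
  have hαM2 : 2*π - α ≤ α * ((M:ℝ) - 1) := by
    have : α * ((M:ℝ) - 1) = α * (M:ℝ) - α := by ring
    linarith [this, hαM]
  -- extraction helper
  have getp : ∀ i : ℤ, 0 ≤ i → i < M → ∃ p φ, p ∈ P ∧ k + 3/2 ≤ ‖p‖ ∧
      ‖p‖ ≤ k + 2 ∧ α * (i:ℝ) < φ ∧ φ ≤ α * ((i:ℝ)+1) ∧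
      p = ((‖p‖ : ℝ):ℂ) * Complex.exp ((φ:ℝ) * Complex.I) := by
    intro i h1 h2
    obtain ⟨p, hp, h3, h4, θ, hθ, h5⟩ := hP i h1 h2
    exact ⟨p, θ, hp, h3, h4, hθ.1, hθ.2, h5⟩
  -- main claim: two sector points sandwiching an angle representing z
  obtain ⟨pa, pb, ψa, ψb, θ, hpaP, hpbP, hpa1, hpb1, hrepa, hrepb, hθ1, hθ2, hgap, hzrep'⟩ :
      ∃ pa pb ψa ψb θ, pa ∈ P ∧ pb ∈ P ∧ k + 3/2 ≤ ‖pa‖ ∧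
        k + 3/2 ≤ ‖pb‖ ∧
        pa = ((‖pa‖ : ℝ):ℂ) * Complex.exp ((ψa:ℝ) * Complex.I) ∧
        pb = ((‖pb‖ : ℝ):ℂ) * Complex.exp ((ψb:ℝ) * Complex.I) ∧
        ψa ≤ θ ∧ θ ≤ ψb ∧ ψb - ψa ≤ 2*α ∧
        z = ((‖z‖ : ℝ):ℂ) * Complex.exp ((θ:ℝ) * Complex.I) := by
    obtain ⟨p0, φ0, hp0P, hp0a, hp0b, hφ0l, hφ0u, hrep0⟩ := getp j hj0 hjM
    rcases le_or_gt φ0 T' with hc | hc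
    · rcases lt_or_ge (j+1) M with hj1 | hj1
      · obtain ⟨p1, φ1, hp1P, hp1a, hp1b, hφ1l, hφ1u, hrep1⟩ := getp (j+1) (by omega) hj1
        push_cast at hφ1l hφ1u
        exact ⟨p0, p1, φ0, φ1, T', hp0P, hp1P, hp0a, hp1a, hrep0, hrep1, hc,
          by linarith, by linarith, hzrep⟩
      · -- j = M - 1 ; wrap to sector 0
        have hjeq : j = M - 1 := by omega
        obtain ⟨p1, φ1, hp1P, hp1a, hp1b, hφ1l, hφ1u, hrep1⟩ := getp 0 le_rfl (by omega)
        push_cast at hφ1l hφ1u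
        have hrep1' : p1 = ((‖p1‖ : ℝ):ℂ)
            * Complex.exp (((φ1 + 2*π : ℝ):ℂ) * Complex.I) := by
          rw [hper φ1]; exact hrep1
        have hφ0l' : α * ((M:ℝ) - 1) < φ0 := by
          rw [hjeq] at hφ0l; push_cast at hφ0l; exact hφ0l
        refine ⟨p0, p1, φ0, φ1 + 2*π, T', hp0P, hp1P, hp0a, hp1a, hrep0, hrep1', hc,
          ?_, ?_, hzrep⟩
        · have : 0 < φ1 := by
            have := hφ1l; simp at this; linarith [this]
          linarith
        · have hφ1u' : φ1 ≤ α := by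
            have := hφ1u; norm_num at this; linarith [this]
          linarith [hαM2]
    · rcases lt_or_ge 0 j with hj1 | hj1
      · obtain ⟨p1, φ1, hp1P, hp1a, hp1b, hφ1l, hφ1u, hrep1⟩ := getp (j-1) (by omega) (by omega)
        push_cast at hφ1l hφ1u
        exact ⟨p1, p0, φ1, φ0, T', hp1P, hp0P, hp1a, hp0a, hrep1, hrep0,
          by linarith, hc.le, by linarith, hzrep⟩
      · -- j = 0
        have hjeq : j = 0 := by omega
        rw [hjeq] at hφ0l hφ0u
        push_cast at hφ0l hφ0u
        have hφ0l' : 0 < φ0 := by simpa using hφ0l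
        have hφ0u' : φ0 ≤ α := by norm_num at hφ0u; linarith [hφ0u]
        obtain ⟨p2, φ2, hp2P, hp2a, hp2b, hφ2l, hφ2u, hrep2⟩ := getp (M-1) (by omega) (by omega)
        push_cast at hφ2l hφ2u
        have hφ2u' : φ2 ≤ α * (M:ℝ) := by
          have : α * ((M:ℝ) - 1 + 1) = α * (M:ℝ) := by ring
          linarith [hφ2u, this]
        rcases le_or_gt (φ2 - 2*π) T' with hd | hd
        · have hexp2 : Complex.exp (((φ2 - 2*π:ℝ):ℂ) * Complex.I)
              = Complex.exp ((φ2:ℝ) * Complex.I) := by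
            rw [← hper (φ2 - 2*π)]; norm_num
          have hrep2' : p2 = ((‖p2‖ : ℝ):ℂ)
              * Complex.exp (((φ2 - 2*π : ℝ):ℂ) * Complex.I) := by
            rw [hexp2]; exact hrep2
          exact ⟨p2, p0, φ2 - 2*π, φ0, T', hp2P, hp0P, hp2a, hp0a, hrep2', hrep0,
            hd, hc.le, by linarith [hαM2], hzrep⟩
        · obtain ⟨p3, φ3, hp3P, hp3a, hp3b, hφ3l, hφ3u, hrep3⟩ :=
            getp (M-2) (by omega) (by omega)
          push_cast at hφ3l hφ3u
          have hφ3u' : φ3 ≤ α * ((M:ℝ) - 1) := by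
            have : α * ((M:ℝ) - 2 + 1) = α * ((M:ℝ) - 1) := by ring
            linarith [hφ3u, this]
          have hzrep2 : z = ((‖z‖ : ℝ):ℂ)
              * Complex.exp (((T' + 2*π :ℝ):ℂ) * Complex.I) := by
            rw [hper T']; exact hzrep
          refine ⟨p3, p2, φ3, φ2, T' + 2*π, hp3P, hp2P, hp3a, hp2a, hrep3, hrep2,
            ?_, by linarith, ?_, hzrep2⟩
          · linarith [hαM1]
          · have : α * ((M:ℝ) - 2) = α * (M:ℝ) - 2*α := by ring
            linarith [hφ3l, this]
  -- now apply the geometric lemma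
  have hC : Convex ℝ C := convex_convexHull ℝ _
  have h0C : (0:ℂ) ∈ C :=
    subset_convexHull ℝ _ (Or.inl (hS (Metric.mem_closedBall_self (by linarith))))
  have hmem : ∀ p : ℂ, ∀ ψ : ℝ, p ∈ P → p + Complex.exp ((ψ:ℂ) * Complex.I) ∈ C := by
    intro p ψ hp
    refine subset_convexHull ℝ _ (Or.inr ?_)
    refine Set.mem_biUnion hp ?_
    simp [Metric.mem_closedBall, Complex.dist_eq, Complex.norm_exp_ofReal_mul_I]
  have ha : pa + Complex.exp ((ψa:ℂ) * Complex.I)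
      = ((‖pa‖ + 1 : ℝ):ℂ) * Complex.exp ((ψa:ℂ) * Complex.I) := by
    conv_lhs => rw [hrepa]
    push_cast; ring
  have hb : pb + Complex.exp ((ψb:ℂ) * Complex.I)
      = ((‖pb‖ + 1 : ℝ):ℂ) * Complex.exp ((ψb:ℂ) * Complex.I) := by
    conv_lhs => rw [hrepb]
    push_cast; ring
  have hρa : (0:ℝ) < ‖pa‖ + 1 := by linarith
  have hρb : (0:ℝ) < ‖pb‖ + 1 := by linarith
  have hgap' : ψb - ψa ≤ π/2 := by linarith
  have hd0 : 0 ≤ (ψb - ψa)/2 := by linarith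
  have hdα : (ψb - ψa)/2 ≤ α := by linarith
  have hcos : 1 - α*α/2 ≤ Real.cos ((ψb - ψa)/2) := by
    have h1 := Real.one_sub_sq_div_two_le_cos (x := (ψb - ψa)/2)
    nlinarith [h1]
  have hkey2 : k + 2 ≤ (k + 5/2) * (1 - α*α/2) := by nlinarith [hα2, hα0]
  have hcpos : (0:ℝ) ≤ 1 - α*α/2 := by nlinarith [hαle, hα0]
  have hra : ‖z‖ ≤ (‖pa‖ + 1) * Real.cos ((ψb - ψa)/2) := by
    have h2 : (k + 5/2) * (1 - α*α/2) ≤ (‖pa‖ + 1) * Real.cos ((ψb - ψa)/2) :=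
      mul_le_mul (by linarith) hcos hcpos (by linarith)
    linarith
  have hrb : ‖z‖ ≤ (‖pb‖ + 1) * Real.cos ((ψb - ψa)/2) := by
    have h2 : (k + 5/2) * (1 - α*α/2) ≤ (‖pb‖ + 1) * Real.cos ((ψb - ψa)/2) :=
      mul_le_mul (by linarith) hcos hcpos (by linarith)
    linarith
  have hfinal := lemB hC h0C (hmem pa ψa hpaP) (hmem pb ψb hpbP) hρa hρb ha hb
    hθ1 hθ2 hgap' hrpos hra hrb
  rwa [← hzrep'] at hfinal
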